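/- Let δ ≥ 1 be real, k ∈ ℕ, s > 0 and t > 0, and set u := s + t. Then for every x ≥ 0 and w ∈ ℝ, exp(t(−iw − x²/2)) · φ^{(δ)}_{s,k}(x, −w) = Σ_{l=0}^{k} C(k,l) (s/u)^{l} (1 − s/u)^{k−l} · φ^{(δ)}_{u,l}(x, −w), where C(k,l) is the binomial coefficient. (This verifies the intertwining identity in the regime s > 0 of the quantum Bessel semigroup of dimension δ, with binomial(k, s/u) mixing weights.) -/

import Mathlib

open Real Finset

/-- Generalized Laguerre polynomial `L_k^{(α)}(x)`. -/
noncomputable def lagPoly (α : ℝ) (k : ℕ) (x : ℝ) : ℝ :=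
  ∑ i ∈ Finset.range (k + 1),
    (-1 : ℝ) ^ i * Real.Gamma (k + α + 1) * x ^ i /
      (Real.Gamma (i + α + 1) * (Nat.factorial (k - i)) * (Nat.factorial i))

/-- Character of the first kind `φ^{(δ)}_{τ,m}(x,w)` of the Laguerre hypergroup of
order `δ - 1`. -/
noncomputable def lagChar (δ τ : ℝ) (m : ℕ) (x w : ℝ) : ℂ :=
  ((Nat.factorial m * Real.Gamma δ / Real.Gamma (m + δ) : ℝ) : ℂ) *
    Complex.exp (Complex.I * τ * w - (|τ| * x ^ 2 / 2 : ℝ)) *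
    ((lagPoly (δ - 1) m (|τ| * x ^ 2) : ℝ) : ℂ)

lemma gamma_pos_shift (δ : ℝ) (hδ : 1 ≤ δ) (m : ℕ) : 0 < Real.Gamma (m + δ) :=
  Real.Gamma_pos_of_pos (by positivity)

lemma norm_lag (δ : ℝ) (hδ : 1 ≤ δ) (m : ℕ) (z : ℝ) :
    (m.factorial * Real.Gamma δ / Real.Gamma (m + δ)) * lagPoly (δ - 1) m z
      = ∑ i ∈ range (m + 1),
          (-1 : ℝ) ^ i * (m.choose i) * Real.Gamma δ / Real.Gamma (i + δ) * z ^ i := by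
  unfold lagPoly
  rw [Finset.mul_sum]
  refine Finset.sum_congr rfl fun i hi => ?_
  have him : i ≤ m := by simpa [Nat.lt_succ_iff] using hi
  have h1 : (m : ℝ) + (δ - 1) + 1 = m + δ := by ring
  have h2 : (i : ℝ) + (δ - 1) + 1 = i + δ := by ring
  rw [h1, h2]
  have hm : Real.Gamma ((m : ℝ) + δ) ≠ 0 := (gamma_pos_shift δ hδ m).ne'
  have hi' : Real.Gamma ((i : ℝ) + δ) ≠ 0 := (gamma_pos_shift δ hδ i).ne'
  have hf1 : ((m - i).factorial : ℝ) ≠ 0 := Nat.cast_ne_zero.2 (Nat.factorial_ne_zero _)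
  have hf2 : (i.factorial : ℝ) ≠ 0 := Nat.cast_ne_zero.2 (Nat.factorial_ne_zero _)
  have hc : (m.choose i : ℝ) * i.factorial * (m - i).factorial = m.factorial := by
    exact_mod_cast congrArg (Nat.cast : ℕ → ℝ)
      (Nat.choose_mul_factorial_mul_factorial him)
  field_simp
  rw [← hc]; ring

lemma key (δ : ℝ) (hδ : 1 ≤ δ) (k : ℕ) (p y : ℝ) :
    (k.factorial * Real.Gamma δ / Real.Gamma (k + δ)) * lagPoly (δ - 1) k (p * y)
      = ∑ l ∈ range (k + 1), (k.choose l : ℝ) * p ^ l * (1 - p) ^ (k - l) *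
          ((l.factorial * Real.Gamma δ / Real.Gamma (l + δ)) * lagPoly (δ - 1) l y) := by
  rw [norm_lag δ hδ k]
  have hrhs : ∀ l ∈ range (k + 1),
      (k.choose l : ℝ) * p ^ l * (1 - p) ^ (k - l) *
          ((l.factorial * Real.Gamma δ / Real.Gamma (l + δ)) * lagPoly (δ - 1) l y)
        = ∑ i ∈ range (k + 1), (if i ≤ l then
            (k.choose l : ℝ) * p ^ l * (1 - p) ^ (k - l) *
              ((-1 : ℝ) ^ i * (l.choose i) * Real.Gamma δ / Real.Gamma (i + δ) * y ^ i)
          else 0) := by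
    intro l hl
    have hlk : l ≤ k := by simpa [Nat.lt_succ_iff] using hl
    rw [norm_lag δ hδ l, Finset.mul_sum, ← Finset.sum_filter]
    have hfil : (range (k + 1)).filter (fun i => i ≤ l) = range (l + 1) := by
      ext a; simp only [Finset.mem_filter, Finset.mem_range, Nat.lt_succ_iff]; omega
    rw [hfil]
  rw [Finset.sum_congr rfl hrhs, Finset.sum_comm]
  refine Finset.sum_congr rfl fun i hi => ?_
  have hik : i ≤ k := by simpa [Nat.lt_succ_iff] using hi
  rw [← Finset.sum_filter]
  have hfil2 : (range (k + 1)).filter (fun l => i ≤ l) = Finset.Ico i (k + 1) := by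
    ext a; simp only [Finset.mem_filter, Finset.mem_range, Finset.mem_Ico]; omega
  rw [hfil2, Finset.sum_Ico_eq_sum_range, show k + 1 - i = (k - i) + 1 from by omega]
  have hbin : ∑ j ∈ range ((k - i) + 1),
      p ^ j * (1 - p) ^ ((k - i) - j) * ((k - i).choose j : ℝ) = 1 := by
    have h := (add_pow p (1 - p) (k - i)).symm
    simpa [show p + (1 - p) = 1 from by ring] using h
  have hterm : ∀ j ∈ range ((k - i) + 1),
      (k.choose (i + j) : ℝ) * p ^ (i + j) * (1 - p) ^ (k - (i + j)) *
          ((-1 : ℝ) ^ i * ((i + j).choose i) * Real.Gamma δ / Real.Gamma (i + δ) * y ^ i)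
        = ((-1 : ℝ) ^ i * (k.choose i) * Real.Gamma δ / Real.Gamma (i + δ) * y ^ i * p ^ i) *
            (p ^ j * (1 - p) ^ ((k - i) - j) * ((k - i).choose j : ℝ)) := by
    intro j hj
    have hjk : j ≤ k - i := by simpa [Nat.lt_succ_iff] using hj
    have hcc : (k.choose (i + j) : ℝ) * ((i + j).choose i) =
        (k.choose i : ℝ) * ((k - i).choose j) := by
      have := Nat.choose_mul (n := k) (show i ≤ i + j by omega)
      rw [show i + j - i = j from by omega] at this
      exact_mod_cast congrArg (Nat.cast : ℕ → ℝ) this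
    rw [show k - (i + j) = (k - i) - j from by omega]
    linear_combination (p ^ i * p ^ j * (1 - p) ^ ((k - i) - j) *
      ((-1 : ℝ) ^ i * Real.Gamma δ / Real.Gamma (i + δ) * y ^ i)) * hcc
  rw [Finset.sum_congr rfl hterm, ← Finset.mul_sum, hbin, mul_one, mul_pow]
  ring

/-- Intertwining identity for the quantum Bessel semigroup of dimension `δ ≥ 1` in the
regime `s > 0`, with binomial(k, s/u) mixing weights, where `u = s + t`. -/
theorem quantum_bessel_intertwining_pos
    (δ : ℝ) (hδ : 1 ≤ δ) (k : ℕ) (s t : ℝ) (hs : 0 < s) (ht : 0 < t)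
    (x : ℝ) (hx : 0 ≤ x) (w : ℝ) :
    Complex.exp ((t : ℂ) * (-Complex.I * (w : ℂ) - (x : ℂ) ^ 2 / 2)) *
        lagChar δ s k x (-w) =
      ∑ l ∈ Finset.range (k + 1),
        ((Nat.choose k l * (s / (s + t)) ^ l * (1 - s / (s + t)) ^ (k - l) : ℝ) : ℂ) *
          lagChar δ (s + t) l x (-w) := by
  have hu : 0 < s + t := by linarith
  have habs : |s| = s := abs_of_pos hs
  have habu : |s + t| = s + t := abs_of_pos hu
  have hkey := key δ hδ k (s / (s + t)) ((s + t) * x ^ 2)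
  rw [show s / (s + t) * ((s + t) * x ^ 2) = s * x ^ 2 from by field_simp] at hkey
  have hsum : ((k.factorial * Real.Gamma δ / Real.Gamma (k + δ) *
        lagPoly (δ - 1) k (s * x ^ 2) : ℝ) : ℂ)
      = ∑ l ∈ range (k + 1),
          (((k.choose l : ℝ) * (s / (s + t)) ^ l * (1 - s / (s + t)) ^ (k - l) *
            ((l.factorial * Real.Gamma δ / Real.Gamma (l + δ)) *
              lagPoly (δ - 1) l ((s + t) * x ^ 2)) : ℝ) : ℂ) := by
    rw [← Complex.ofReal_sum]
    exact_mod_cast congrArg Complex.ofReal hkey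
  unfold lagChar
  rw [habs, habu]
  have hexp : Complex.exp ((t : ℂ) * (-Complex.I * (w : ℂ) - (x : ℂ) ^ 2 / 2)) *
      Complex.exp (Complex.I * (s : ℂ) * ((-w : ℝ) : ℂ) - ((s * x ^ 2 / 2 : ℝ) : ℂ))
      = Complex.exp (Complex.I * ((s + t : ℝ) : ℂ) * ((-w : ℝ) : ℂ) -
          (((s + t) * x ^ 2 / 2 : ℝ) : ℂ)) := by
    rw [← Complex.exp_add]; congr 1; push_cast; ring
  set E : ℂ := Complex.exp (Complex.I * ((s + t : ℝ) : ℂ) * ((-w : ℝ) : ℂ) -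
      (((s + t) * x ^ 2 / 2 : ℝ) : ℂ)) with hE
  calc Complex.exp ((t : ℂ) * (-Complex.I * (w : ℂ) - (x : ℂ) ^ 2 / 2)) *
        (((k.factorial * Real.Gamma δ / Real.Gamma (k + δ) : ℝ) : ℂ) *
          Complex.exp (Complex.I * (s : ℂ) * ((-w : ℝ) : ℂ) - ((s * x ^ 2 / 2 : ℝ) : ℂ)) *
          ((lagPoly (δ - 1) k (s * x ^ 2) : ℝ) : ℂ))
      = ((k.factorial * Real.Gamma δ / Real.Gamma (k + δ) *
          lagPoly (δ - 1) k (s * x ^ 2) : ℝ) : ℂ) * E := by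
        rw [← hexp]; push_cast; ring
    _ = (∑ l ∈ range (k + 1),
          (((k.choose l : ℝ) * (s / (s + t)) ^ l * (1 - s / (s + t)) ^ (k - l) *
            ((l.factorial * Real.Gamma δ / Real.Gamma (l + δ)) *
              lagPoly (δ - 1) l ((s + t) * x ^ 2)) : ℝ) : ℂ)) * E := by rw [hsum]
    _ = _ := by
        rw [Finset.sum_mul]
        refine Finset.sum_congr rfl fun l _ => ?_
        push_cast
        ring
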